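/- There exist a ceer R and a computable binary tree T such that: every infinite path of T is the characteristic function of an infinite partial transversal of R; T has at least one infinite path; and no infinite path of T is computable. Consequently the Turing degree of every infinite path of T belongs to Spec⇒(Id, R), the set of infinite paths of T is a special Π⁰₁ class, and the degree 0 does not belong to Spec⇒(Id, R). -/

import Mathlib

/-- `RecursiveIn O f` means the partial function `f` is partial recursive in the
(total) oracle `O`. -/
inductive RecursiveIn' (O : ℕ → ℕ) : (ℕ →. ℕ) → Prop
  | zero : RecursiveIn' O (pure 0)
  | succ : RecursiveIn' O Nat.succ
  | left : RecursiveIn' O ↑fun n : ℕ => n.unpair.1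
  | right : RecursiveIn' O ↑fun n : ℕ => n.unpair.2
  | oracle : RecursiveIn' O ↑O
  | pair {f g} : RecursiveIn' O f → RecursiveIn' O g →
      RecursiveIn' O fun n => Nat.pair <$> f n <*> g n
  | comp {f g} : RecursiveIn' O f → RecursiveIn' O g →
      RecursiveIn' O fun n => g n >>= f
  | prec {f g} : RecursiveIn' O f → RecursiveIn' O g →
      RecursiveIn' O (Nat.unpaired fun a n =>
        n.rec (f a) fun y IH => do let i ← IH; g (Nat.pair a (Nat.pair y i)))
  | rfind {f} : RecursiveIn' O f →
      RecursiveIn' O fun a => Nat.rfind fun n => (fun m => m = 0) <$> f (Nat.pair a n)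

/-- Turing reducibility between total functions on `ℕ`. -/
def TuringReducible' (f g : ℕ → ℕ) : Prop := RecursiveIn' g ↑f

/-- Turing equivalence of total functions on `ℕ`. -/
def TuringEquivalent' (f g : ℕ → ℕ) : Prop := TuringReducible' f g ∧ TuringReducible' g f

theorem TuringReducible'.refl (f : ℕ → ℕ) : TuringReducible' f f := RecursiveIn'.oracle

theorem RecursiveIn'.trans' {f : ℕ →. ℕ} {g h : ℕ → ℕ}
    (hf : RecursiveIn' g f) (hg : TuringReducible' g h) : RecursiveIn' h f := by
  induction hf with
  | zero => exact .zero
  | succ => exact .succ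
  | left => exact .left
  | right => exact .right
  | oracle => exact hg
  | pair _ _ ih₁ ih₂ => exact .pair ih₁ ih₂
  | comp _ _ ih₁ ih₂ => exact .comp ih₁ ih₂
  | prec _ _ ih₁ ih₂ => exact .prec ih₁ ih₂
  | rfind _ ih => exact .rfind ih

theorem TuringReducible'.trans {f g h : ℕ → ℕ}
    (h₁ : TuringReducible' f g) (h₂ : TuringReducible' g h) : TuringReducible' f h :=
  RecursiveIn'.trans' h₁ h₂

/-- The setoid of Turing equivalence. -/
def turingSetoid : Setoid (ℕ → ℕ) :=
  ⟨TuringEquivalent',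
    fun f => ⟨.refl f, .refl f⟩,
    fun ⟨h₁, h₂⟩ => ⟨h₂, h₁⟩,
    fun ⟨a₁, a₂⟩ ⟨b₁, b₂⟩ => ⟨a₁.trans b₁, b₂.trans a₂⟩⟩

/-- Turing degrees. -/
def TuringDegree' : Type := Quotient turingSetoid

/-- The Turing degree of a total function. -/
def TuringDegree'.deg (f : ℕ → ℕ) : TuringDegree' := Quotient.mk turingSetoid f

instance : LE TuringDegree' :=
  ⟨fun d₁ d₂ =>
    Quotient.liftOn₂ d₁ d₂ TuringReducible'
      (fun _ _ _ _ h h' =>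
        propext ⟨fun hr => (h.2.trans hr).trans h'.1, fun hr => (h.1.trans hr).trans h'.2⟩)⟩

instance : LT TuringDegree' := ⟨fun d₁ d₂ => d₁ ≤ d₂ ∧ ¬d₂ ≤ d₁⟩

/-- The least Turing degree. -/
def TuringDegree'.zero : TuringDegree' := TuringDegree'.deg fun _ => 0

/-- A partial function is computable in a Turing degree if it is recursive in some
(equivalently, any) representative of that degree. -/
def TuringDegree'.ComputableIn (d : TuringDegree') (f : ℕ →. ℕ) : Prop :=
  Quotient.liftOn d (fun g => RecursiveIn' g f)
    (fun _ _ h => propext ⟨fun hr => hr.trans' h.1, fun hr => hr.trans' h.2⟩)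

open Classical in
/-- The characteristic function of a set of naturals. -/
noncomputable def charFun (A : Set ℕ) : ℕ → ℕ := fun n => if n ∈ A then 1 else 0

/-- Turing reducibility between sets of naturals. -/
noncomputable def SetTuringReducible (A B : Set ℕ) : Prop :=
  TuringReducible' (charFun A) (charFun B)

/-- The Turing degree of a set of naturals. -/
noncomputable def TuringDegree'.degSet (A : Set ℕ) : TuringDegree' :=
  TuringDegree'.deg (charFun A)

/-- `R` is `d`-computably reducible to `S`. -/
def ReducibleIn (d : TuringDegree') (R S : ℕ → ℕ → Prop) : Prop :=
  ∃ f : ℕ → ℕ, d.ComputableIn ↑f ∧ ∀ x y, R x y ↔ S (f x) (f y)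

/-- The reducibility spectrum of the pair `(R, S)`. -/
def SpecRed (R S : ℕ → ℕ → Prop) : Set TuringDegree' := {d | ReducibleIn d R S}

/-- The bi-reducibility spectrum of the pair `(R, S)`. -/
def SpecBired (R S : ℕ → ℕ → Prop) : Set TuringDegree' :=
  {d | ReducibleIn d R S ∧ ReducibleIn d S R}

/-- The equivalence relation generated by a set `A`: two numbers are equivalent
iff they are equal or both belong to `A`. -/
def genRel (A : Set ℕ) : ℕ → ℕ → Prop := fun x y => x = y ∨ (x ∈ A ∧ y ∈ A)

/-- A ceer: an equivalence relation whose set of pairs is computably enumerable. -/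
def Ceer (R : ℕ → ℕ → Prop) : Prop :=
  Equivalence R ∧ REPred fun p : ℕ × ℕ => R p.1 p.2

/-- A computably enumerable set of naturals. -/
def CePred (A : Set ℕ) : Prop := REPred (· ∈ A)

/-- A partial transversal of `R`: a set any two distinct elements of which are
`R`-inequivalent. -/
def PartialTransversal (R : ℕ → ℕ → Prop) (A : Set ℕ) : Prop :=
  ∀ x ∈ A, ∀ y ∈ A, x ≠ y → ¬R x y

/-- An introreducible set: an infinite set computable from each of its infinite subsets. -/
def Introreducible (B : Set ℕ) : Prop :=
  B.Infinite ∧ ∀ C : Set ℕ, C ⊆ B → C.Infinite → SetTuringReducible B C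


open Nat.Partrec.Code

lemma band_tt {a b : Bool} : (a && b) = true ↔ a = true ∧ b = true := by simp

/-- `x` is a candidate for requirement `e` at stage `s`. -/
def goodb (e s x : ℕ) : Bool :=
  decide (2 * e < x) && (evaln s (Denumerable.ofNat Nat.Partrec.Code e) x).isSome

/-- `x` is the element enumerated for requirement `e`, at the (least) stage `s`. -/
def witb (e s x : ℕ) : Bool :=
  goodb e s x && ((List.range x).all fun y => !goodb e s y) &&
    ((List.range s).all fun s' => (List.range s').all fun y => !goodb e s' y)

/-- stage approximation of the simple set -/
def memAs (s x : ℕ) : Bool :=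
  (List.range s).any fun e => (List.range (s + 1)).any fun s' => witb e s' x

/-- the simple set -/
def SimpleA : Set ℕ := {x | ∃ e s, witb e s x = true}

lemma goodb_lt {e s x : ℕ} (h : goodb e s x = true) : x < s := by
  have h2 := (band_tt.1 h).2
  rcases Option.isSome_iff_exists.1 h2 with ⟨v, hv⟩
  exact evaln_bound (by simpa using hv)

lemma goodb_gt {e s x : ℕ} (h : goodb e s x = true) : 2 * e < x := by
  have := (band_tt.1 h).1; simpa using this

lemma witb_iff {e s x : ℕ} : witb e s x = true ↔
    goodb e s x = true ∧ (∀ y < x, ¬ goodb e s y = true) ∧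
      (∀ s' < s, ∀ y, ¬ goodb e s' y = true) := by
  constructor
  · intro h
    rcases band_tt.1 h with ⟨h12, h3⟩
    rcases band_tt.1 h12 with ⟨h1, h2⟩
    simp only [List.all_eq_true, List.mem_range, Bool.not_eq_true'] at h2 h3
    refine ⟨h1, fun y hy => by simp [h2 y hy], fun s' hs' y hg => ?_⟩
    have := h3 s' hs' y (goodb_lt hg); simp [hg] at this
  · rintro ⟨h1, h2, h3⟩
    refine band_tt.2 ⟨band_tt.2 ⟨h1, ?_⟩, ?_⟩ <;>
      simp only [List.all_eq_true, List.mem_range, Bool.not_eq_true']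
    · intro y hy; by_contra hc; simp only [Bool.not_eq_false] at hc; exact h2 y hy hc
    · intro s' hs' y _; by_contra hc; simp only [Bool.not_eq_false] at hc; exact h3 s' hs' y hc

lemma witb_unique {e s s' x x' : ℕ} (h : witb e s x = true) (h' : witb e s' x' = true) :
    s = s' ∧ x = x' := by
  rcases witb_iff.1 h with ⟨h1, h2, h3⟩
  rcases witb_iff.1 h' with ⟨h1', h2', h3'⟩
  have hss : s = s' := by
    rcases lt_trichotomy s s' with hlt | heq | hgt
    · exact absurd h1 (h3' s hlt x)
    · exact heq
    · exact absurd h1' (h3 s' hgt x')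
  subst hss
  refine ⟨rfl, ?_⟩
  rcases lt_trichotomy x x' with hlt | heq | hgt
  · exact absurd h1 (h2' x hlt)
  · exact heq
  · exact absurd h1' (h2 x' hgt)

lemma memAs_iff {s x : ℕ} : memAs s x = true ↔
    ∃ e < s, ∃ s' ≤ s, witb e s' x = true := by
  simp only [memAs, List.any_eq_true, List.mem_range, Nat.lt_succ_iff]

lemma memAs_mono {s t x : ℕ} (hst : s ≤ t) (h : memAs s x = true) : memAs t x = true := by
  rcases memAs_iff.1 h with ⟨e, he, s', hs', hw⟩
  exact memAs_iff.2 ⟨e, lt_of_lt_of_le he hst, s', le_trans hs' hst, hw⟩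

lemma mem_simpleA_iff {x : ℕ} : x ∈ SimpleA ↔ ∃ s, memAs s x = true := by
  constructor
  · rintro ⟨e, s, hw⟩
    exact ⟨e + s + 1, memAs_iff.2 ⟨e, by omega, s, by omega, hw⟩⟩
  · rintro ⟨s, h⟩
    rcases memAs_iff.1 h with ⟨e, _, s', _, hw⟩
    exact ⟨e, s', hw⟩

open Classical in
/-- Density: at most `n` elements of `SimpleA` below `2n`. -/
lemma simpleA_density (n : ℕ) :
    ((Finset.range (2 * n)).filter (· ∈ SimpleA)).card ≤ n := by
  classical
  have : ((Finset.range (2 * n)).filter (· ∈ SimpleA)).card ≤ (Finset.range n).card := by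
    apply Finset.card_le_card_of_injOn
      (fun x => if h : ∃ e s, witb e s x = true then h.choose else 0)
    · intro x hx
      simp only [Finset.mem_coe, Finset.mem_filter, Finset.mem_range] at hx
      obtain ⟨hx2n, hxA⟩ := hx
      have hxA' : ∃ e s, witb e s x = true := hxA
      simp only [dif_pos hxA']
      obtain ⟨s, hw⟩ := hxA'.choose_spec
      have := goodb_gt (witb_iff.1 hw).1
      simp only [Finset.mem_coe, Finset.mem_range]
      omega
    · intro x hx y hy hxy
      simp only [Finset.mem_coe, Finset.mem_filter, Finset.mem_range] at hx hy
      have hxA' : ∃ e s, witb e s x = true := hx.2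
      have hyA' : ∃ e s, witb e s y = true := hy.2
      simp only [dif_pos hxA', dif_pos hyA'] at hxy
      obtain ⟨s, hw⟩ := hxA'.choose_spec
      obtain ⟨s', hw'⟩ := hyA'.choose_spec
      rw [hxy] at hw
      exact (witb_unique hw hw').2
  simpa using this

/-- Immunity: every infinite c.e. set (as domain of a code) meets `SimpleA`. -/
lemma simpleA_immune (c : Nat.Partrec.Code) (hinf : {x | (eval c x).Dom}.Infinite) :
    ∃ x, (eval c x).Dom ∧ x ∈ SimpleA := by
  set e := Encodable.encode c with he
  obtain ⟨x, hx, hgt⟩ := hinf.exists_gt (2 * e)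
  obtain ⟨v, hv⟩ := Part.dom_iff_mem.1 hx
  obtain ⟨k, hk⟩ := evaln_complete.1 hv
  have hg : goodb e k x = true := by
    refine band_tt.2 ⟨by simpa using hgt, ?_⟩
    rw [he, Denumerable.ofNat_encode]
    exact Option.isSome_iff_exists.2 ⟨v, by simpa using hk⟩
  have hPd : ∀ s, Decidable (∃ y, goodb e s y = true) := fun s =>
    decidable_of_iff (∃ y < s, goodb e s y = true)
      ⟨fun ⟨y, _, h⟩ => ⟨y, h⟩, fun ⟨y, h⟩ => ⟨y, goodb_lt h, h⟩⟩
  have hP' : ∃ s, ∃ y, goodb e s y = true := ⟨k, x, hg⟩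
  let s₀ := @Nat.find _ hPd hP'
  have hs₀ : ∃ y, goodb e s₀ y = true := @Nat.find_spec _ hPd hP'
  have hs₀min : ∀ s < s₀, ¬ ∃ y, goodb e s y = true := fun s hs => @Nat.find_min _ hPd hP' s hs
  let x₀ := Nat.find hs₀
  have hx₀ : goodb e s₀ x₀ = true := Nat.find_spec hs₀
  have hx₀min : ∀ y < x₀, ¬ goodb e s₀ y = true := fun y hy => Nat.find_min hs₀ hy
  have hw : witb e s₀ x₀ = true :=
    witb_iff.2 ⟨hx₀, hx₀min, fun s' hs' y hgy => hs₀min s' hs' ⟨y, hgy⟩⟩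
  refine ⟨x₀, ?_, ⟨e, s₀, hw⟩⟩
  have h2 := (band_tt.1 hx₀).2
  rcases Option.isSome_iff_exists.1 h2 with ⟨w, hwv⟩
  have hmem : w ∈ eval (Denumerable.ofNat Nat.Partrec.Code e) x₀ := evaln_sound (by simpa using hwv)
  rw [he, Denumerable.ofNat_encode] at hmem
  exact Part.dom_iff_mem.2 ⟨w, hmem⟩

/-! ### Primitive recursiveness of the approximations -/

lemma List.all_eq_foldr' {β} (l : List β) (p : β → Bool) :
    l.all p = l.foldr (fun b r => p b && r) true := by
  induction l with
  | nil => rfl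
  | cons a l ih => simp [List.all_cons, ih]

lemma List.any_eq_foldr' {β} (l : List β) (p : β → Bool) :
    l.any p = l.foldr (fun b r => p b || r) false := by
  induction l with
  | nil => rfl
  | cons a l ih => simp [List.any_cons, ih]

lemma Primrec.list_all' {α β} [Primcodable α] [Primcodable β] {L : α → List β}
    {f : α → β → Bool} (hL : Primrec L) (hf : Primrec₂ f) :
    Primrec fun a => (L a).all (f a) := by
  have h : Primrec fun a => (L a).foldr (fun b r => f a b && r) true :=
    Primrec.list_foldr hL (Primrec.const true)
      ((Primrec.dom_bool₂ (· && ·)).comp (hf.comp Primrec.fst (Primrec.fst.comp Primrec.snd))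
        (Primrec.snd.comp Primrec.snd)).to₂
  exact h.of_eq fun a => (List.all_eq_foldr' _ _).symm

lemma Primrec.list_any' {α β} [Primcodable α] [Primcodable β] {L : α → List β}
    {f : α → β → Bool} (hL : Primrec L) (hf : Primrec₂ f) :
    Primrec fun a => (L a).any (f a) := by
  have h : Primrec fun a => (L a).foldr (fun b r => f a b || r) false :=
    Primrec.list_foldr hL (Primrec.const false)
      ((Primrec.dom_bool₂ (· || ·)).comp (hf.comp Primrec.fst (Primrec.fst.comp Primrec.snd))
        (Primrec.snd.comp Primrec.snd)).to₂
  exact h.of_eq fun a => (List.any_eq_foldr' _ _).symm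

lemma primrec_goodb : Primrec fun p : (ℕ × ℕ) × ℕ => goodb p.1.1 p.1.2 p.2 := by
  have h1 : Primrec fun p : (ℕ × ℕ) × ℕ => decide (2 * p.1.1 < p.2) :=
    Primrec.nat_lt.comp (Primrec.nat_mul.comp (Primrec.const 2)
      (Primrec.fst.comp Primrec.fst)) Primrec.snd |>.decide
  have h2 : Primrec fun p : (ℕ × ℕ) × ℕ =>
      (evaln p.1.2 (Denumerable.ofNat Nat.Partrec.Code p.1.1) p.2).isSome :=
    Primrec.option_isSome.comp <| primrec_evaln.comp <|
      (((Primrec.snd.comp Primrec.fst).pair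
        ((Primrec.ofNat _).comp (Primrec.fst.comp Primrec.fst))).pair Primrec.snd)
  exact (Primrec.dom_bool₂ (· && ·)).comp h1 h2

lemma primrec_witb : Primrec fun p : (ℕ × ℕ) × ℕ => witb p.1.1 p.1.2 p.2 := by
  have t1 := primrec_goodb
  have hnotgood : Primrec₂ fun (p : (ℕ × ℕ) × ℕ) (y : ℕ) => !goodb p.1.1 p.1.2 y :=
    ((Primrec.dom_bool (!·)).comp (primrec_goodb.comp
      ((((Primrec.fst.comp (Primrec.fst.comp Primrec.fst)).pair
        (Primrec.snd.comp (Primrec.fst.comp Primrec.fst)))).pair Primrec.snd))).to₂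
  have t2 : Primrec fun p : (ℕ × ℕ) × ℕ =>
      (List.range p.2).all fun y => !goodb p.1.1 p.1.2 y :=
    Primrec.list_all' (Primrec.list_range.comp Primrec.snd) hnotgood
  have hinner : Primrec₂ fun (q : ((ℕ × ℕ) × ℕ) × ℕ) (y : ℕ) => !goodb q.1.1.1 q.2 y :=
    ((Primrec.dom_bool (!·)).comp (primrec_goodb.comp
      ((((Primrec.fst.comp (Primrec.fst.comp (Primrec.fst.comp Primrec.fst))).pair
        (Primrec.snd.comp Primrec.fst))).pair Primrec.snd))).to₂
  have t3 : Primrec fun p : (ℕ × ℕ) × ℕ =>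
      (List.range p.1.2).all fun s' => (List.range s').all fun y => !goodb p.1.1 s' y :=
    Primrec.list_all' (Primrec.list_range.comp (Primrec.snd.comp Primrec.fst))
      (Primrec.list_all' (Primrec.list_range.comp Primrec.snd) hinner).to₂
  exact (Primrec.dom_bool₂ (· && ·)).comp
    ((Primrec.dom_bool₂ (· && ·)).comp t1 t2) t3

lemma primrec_memAs : Primrec₂ memAs := by
  have hw : Primrec₂ fun (q : (ℕ × ℕ) × ℕ) (s' : ℕ) => witb q.2 s' q.1.2 :=
    (primrec_witb.comp (((Primrec.snd.comp Primrec.fst).pair Primrec.snd).pair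
      (Primrec.snd.comp (Primrec.fst.comp Primrec.fst)))).to₂
  have hinner : Primrec₂ fun (a : ℕ × ℕ) (e : ℕ) =>
      (List.range (a.1 + 1)).any fun s' => witb e s' a.2 :=
    (Primrec.list_any' (Primrec.list_range.comp
      (Primrec.succ.comp (Primrec.fst.comp Primrec.fst))) hw).to₂
  exact (Primrec.list_any' (Primrec.list_range.comp Primrec.fst) hinner).to₂

/-! ### c.e. predicates -/

lemma rePred_exists_bool {α} [Primcodable α] {q : α → ℕ → Bool} (hq : Computable₂ q) :
    REPred fun a => ∃ s, q a s = true := by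
  have h1 : Partrec fun a => Nat.rfind fun n => ((q a n : Part Bool)) :=
    Partrec.rfind hq.partrec₂
  have h2 : Partrec fun a => (Nat.rfind fun n => ((q a n : Part Bool))).map fun _ => () :=
    h1.map (Computable.const ()).to₂
  refine h2.of_eq fun a => Part.ext fun u => ?_
  constructor
  · intro hu
    rcases Part.mem_map_iff _ |>.1 hu with ⟨n, hn, -⟩
    have hq' : q a n = true := by
      have := Nat.rfind_spec hn
      simpa [Part.mem_some_iff] using this
    exact Part.mem_assert_iff.2 ⟨⟨n, hq'⟩, by simp [Part.mem_some_iff]⟩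
  · intro hu
    rcases Part.mem_assert_iff.1 hu with ⟨⟨n, hn⟩, hu'⟩
    have hu'' : u = () := by simpa [Part.mem_some_iff] using hu'
    subst hu''
    have hdom : (Nat.rfind fun n => ((q a n : Part Bool))).Dom := by
      refine Nat.rfind_dom.2 ?_
      exact ⟨n, by simpa [Part.mem_some_iff] using hn, fun {m} _ => trivial⟩
    rcases Part.dom_iff_mem.1 hdom with ⟨m, hm⟩
    exact Part.mem_map_iff _ |>.2 ⟨m, hm, rfl⟩

lemma rePred_simpleA : REPred (· ∈ SimpleA) := by
  have : REPred fun x : ℕ => ∃ s, memAs s x = true :=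
    rePred_exists_bool (Primrec₂.to_comp (primrec_memAs.comp Primrec.snd Primrec.fst).to₂)
  exact this.of_eq fun x => mem_simpleA_iff.symm

/-- the equivalence relation -/
def RelR : ℕ → ℕ → Prop := fun x y => x = y ∨ (x ∈ SimpleA ∧ y ∈ SimpleA)

lemma relR_equiv : Equivalence RelR where
  refl x := Or.inl rfl
  symm {x y} h := by rcases h with h | ⟨h1, h2⟩; exacts [Or.inl h.symm, Or.inr ⟨h2, h1⟩]
  trans {x y z} h h' := by
    rcases h with rfl | ⟨h1, h2⟩
    · exact h'
    · rcases h' with rfl | ⟨h1', h2'⟩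
      · exact Or.inr ⟨h1, h2⟩
      · exact Or.inr ⟨h1, h2'⟩

lemma rePred_relR : REPred fun p : ℕ × ℕ => RelR p.1 p.2 := by
  have hq : Computable₂ fun (p : ℕ × ℕ) (s : ℕ) =>
      (decide (p.1 = p.2) || (memAs s p.1 && memAs s p.2)) := by
    apply Primrec.to_comp
    exact ((Primrec.dom_bool₂ (· || ·)).comp
      (Primrec.eq.comp (Primrec.fst.comp Primrec.fst) (Primrec.snd.comp Primrec.fst)).decide
      ((Primrec.dom_bool₂ (· && ·)).comp
        (primrec_memAs.comp Primrec.snd (Primrec.fst.comp Primrec.fst))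
        (primrec_memAs.comp Primrec.snd (Primrec.snd.comp Primrec.fst)))).to₂
  have := rePred_exists_bool hq
  refine this.of_eq fun p => ?_
  simp only [Bool.or_eq_true, Bool.and_eq_true, decide_eq_true_eq]
  constructor
  · rintro ⟨s, h | ⟨h1, h2⟩⟩
    · exact Or.inl h
    · exact Or.inr ⟨mem_simpleA_iff.2 ⟨s, h1⟩, mem_simpleA_iff.2 ⟨s, h2⟩⟩
  · rintro (h | ⟨h1, h2⟩)
    · exact ⟨0, Or.inl h⟩
    · rcases mem_simpleA_iff.1 h1 with ⟨s1, hs1⟩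
      rcases mem_simpleA_iff.1 h2 with ⟨s2, hs2⟩
      exact ⟨max s1 s2, Or.inr ⟨memAs_mono (le_max_left _ _) hs1,
        memAs_mono (le_max_right _ _) hs2⟩⟩

/-! ### the tree -/

/-- number of `true`s among the first `n` answers of `σ` -/
def cnt (σ : List Bool) (n : ℕ) : ℕ :=
  (List.range n).foldr (fun i c => bif σ.getD i false then c + 1 else c) 0

lemma foldr_count (l : List ℕ) (p : ℕ → Bool) :
    l.foldr (fun i c => bif p i then c + 1 else c) 0 = (l.filter p).length := by
  induction l with
  | nil => rfl
  | cons a l ih => cases hp : p a <;> simp [List.filter_cons, hp, ih]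

lemma length_filter_range (n : ℕ) (p : ℕ → Bool) :
    ((List.range n).filter p).length = ((Finset.range n).filter (fun i => p i = true)).card := by
  induction n with
  | zero => rfl
  | succ n ih =>
      rw [List.range_succ, List.filter_append, List.length_append, Finset.range_add_one,
        Finset.filter_insert]
      cases hp : p n
      · rw [if_neg (by simp [hp])]
        simp [List.filter_cons, hp, ih]
      · rw [if_pos (by simp [hp]), Finset.card_insert_of_notMem (by simp)]
        simp [List.filter_cons, hp, ih]

lemma cnt_eq_card (σ : List Bool) (n : ℕ) :
    cnt σ n = ((Finset.range n).filter (fun i => σ.getD i false = true)).card := by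
  rw [cnt, foldr_count, length_filter_range]

/-- the tree as a boolean predicate -/
def treeb (σ : List Bool) : Bool :=
  ((List.range σ.length).all fun i => !(σ.getD i false) || !(memAs σ.length i)) &&
    ((List.range (σ.length + 1)).all fun n =>
      !(decide (2 * n ≤ σ.length)) || decide (n ≤ cnt σ (2 * n)))

/-- the tree -/
def TreeT : Set (List Bool) := {σ | treeb σ = true}

lemma treeb_iff {σ : List Bool} : σ ∈ TreeT ↔
    (∀ i < σ.length, σ.getD i false = true → memAs σ.length i = false) ∧
      (∀ n, 2 * n ≤ σ.length → n ≤ cnt σ (2 * n)) := by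
  show treeb σ = true ↔ _
  rw [treeb, band_tt]
  simp only [List.all_eq_true, List.mem_range, Bool.or_eq_true, Bool.not_eq_true',
    decide_eq_true_eq, Bool.not_eq_true, Nat.lt_succ_iff]
  constructor
  · rintro ⟨h1, h2⟩
    refine ⟨fun i hi ht => ?_, fun n hn => ?_⟩
    · rcases h1 i hi with h | h
      · rw [ht] at h; exact absurd h (by simp)
      · exact h
    · rcases h2 n (le_trans (by omega) hn) with h | h
      · exact absurd hn (by simpa using h)
      · exact h
  · rintro ⟨h1, h2⟩
    refine ⟨fun i hi => ?_, fun n _ => ?_⟩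
    · cases ht : σ.getD i false
      · exact Or.inl rfl
      · exact Or.inr (h1 i hi ht)
    · by_cases hn : 2 * n ≤ σ.length
      · exact Or.inr (h2 n hn)
      · exact Or.inl (by simpa using hn)

lemma computablePred_treeT : ComputablePred (· ∈ TreeT) := by
  have hc : Primrec treeb := by
    have hlen : Primrec fun σ : List Bool => σ.length := Primrec.list_length
    have hcnt : Primrec₂ cnt := by
      have hstep : Primrec₂ fun (p : List Bool × ℕ) (q : ℕ × ℕ) =>
          bif p.1.getD q.1 false then q.2 + 1 else q.2 :=
        (Primrec.cond ((Primrec.list_getD false).comp (Primrec.fst.comp Primrec.fst)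
            (Primrec.fst.comp Primrec.snd))
          (Primrec.succ.comp (Primrec.snd.comp Primrec.snd))
          (Primrec.snd.comp Primrec.snd)).to₂
      exact (Primrec.list_foldr (Primrec.list_range.comp Primrec.snd)
        (Primrec.const 0) hstep).to₂
    have h1 : Primrec fun σ : List Bool =>
        (List.range σ.length).all fun i => !(σ.getD i false) || !(memAs σ.length i) := by
      apply Primrec.list_all' (Primrec.list_range.comp hlen)
      exact ((Primrec.dom_bool₂ (· || ·)).comp
        ((Primrec.dom_bool (!·)).comp ((Primrec.list_getD false).comp Primrec.fst Primrec.snd))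
        ((Primrec.dom_bool (!·)).comp
          (primrec_memAs.comp (hlen.comp Primrec.fst) Primrec.snd))).to₂
    have h2 : Primrec fun σ : List Bool =>
        (List.range (σ.length + 1)).all fun n =>
          !(decide (2 * n ≤ σ.length)) || decide (n ≤ cnt σ (2 * n)) := by
      apply Primrec.list_all' (Primrec.list_range.comp (Primrec.succ.comp hlen))
      exact ((Primrec.dom_bool₂ (· || ·)).comp
        ((Primrec.dom_bool (!·)).comp ((Primrec.nat_le.comp
          (Primrec.nat_mul.comp (Primrec.const 2) Primrec.snd) (hlen.comp Primrec.fst)).decide))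
        (Primrec.nat_le.comp Primrec.snd
          (hcnt.comp Primrec.fst
            (Primrec.nat_mul.comp (Primrec.const 2) Primrec.snd))).decide).to₂
    exact (Primrec.dom_bool₂ (· && ·)).comp h1 h2
  exact ⟨fun σ => instDecidableEqBool (treeb σ) true,
    (Primrec.eq.comp hc (Primrec.const true)).decide.to_comp⟩

lemma treeT_prefix_closed : ∀ σ ∈ TreeT, ∀ τ : List Bool, τ <+: σ → τ ∈ TreeT := by
  intro σ hσ τ hpre
  obtain ⟨t, rfl⟩ := hpre
  rcases treeb_iff.1 hσ with ⟨h1, h2⟩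
  have hlen : τ.length ≤ (τ ++ t).length := by simp
  have hgetD : ∀ i < τ.length, (τ ++ t).getD i false = τ.getD i false := fun i hi =>
    List.getD_append _ _ _ _ hi
  have hcnt : ∀ n, 2 * n ≤ τ.length → cnt τ (2 * n) = cnt (τ ++ t) (2 * n) := by
    intro n hn
    rw [cnt_eq_card, cnt_eq_card]
    congr 1
    apply Finset.filter_congr
    intro i hi
    simp only [Finset.mem_range] at hi
    rw [hgetD i (by omega)]
  refine treeb_iff.2 ⟨fun i hi ht => ?_, fun n hn => ?_⟩
  · have h1' := h1 i (lt_of_lt_of_le hi hlen) (by rw [hgetD i hi]; exact ht)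
    by_contra hc
    have hc' : memAs τ.length i = true := by
      cases h : memAs τ.length i
      · exact absurd h hc
      · rfl
    have := memAs_mono hlen hc'
    rw [h1'] at this
    exact absurd this (by simp)
  · rw [hcnt n hn]
    exact h2 n (le_trans hn hlen)

/-! ### paths -/

lemma getD_map_range (X : ℕ → Bool) {i k : ℕ} (h : i < k) :
    (((List.range k).map X).getD i false) = X i := by
  rw [List.getD_eq_getElem _ _ (by simpa using h)]
  simp

lemma len_map_range (X : ℕ → Bool) (k : ℕ) : ((List.range k).map X).length = k := by simp

lemma path_subset_compl {X : ℕ → Bool} (hX : ∀ k, (List.range k).map X ∈ TreeT) :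
    ∀ i, X i = true → i ∉ SimpleA := by
  intro i hi hA
  rcases mem_simpleA_iff.1 hA with ⟨s, hs⟩
  set k := max (i + 1) s with hk
  have h1 := (treeb_iff.1 (hX k)).1
  have hfalse := h1 i (by rw [len_map_range]; omega)
    (by rw [getD_map_range X (by omega)]; exact hi)
  rw [len_map_range] at hfalse
  have htrue : memAs k i = true := memAs_mono (le_max_right _ _) hs
  rw [hfalse] at htrue
  exact absurd htrue (by simp)

lemma cnt_map_range (X : ℕ → Bool) {n k : ℕ} (h : n ≤ k) :
    cnt ((List.range k).map X) n = ((Finset.range n).filter (fun i => X i = true)).card := by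
  classical
  rw [cnt_eq_card]
  congr 1
  apply Finset.filter_congr
  intro i hi
  simp only [Finset.mem_range] at hi
  rw [getD_map_range X (by omega)]

lemma path_card {X : ℕ → Bool} (hX : ∀ k, (List.range k).map X ∈ TreeT) (n : ℕ) :
    n ≤ ((Finset.range (2 * n)).filter (fun i => X i = true)).card := by
  classical
  have h2 := (treeb_iff.1 (hX (2 * n))).2 n (by rw [len_map_range])
  rwa [cnt_map_range X (le_refl _)] at h2

lemma path_infinite {X : ℕ → Bool} (hX : ∀ k, (List.range k).map X ∈ TreeT) :
    {n | X n = true}.Infinite := by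
  classical
  by_contra hfin
  rw [Set.not_infinite] at hfin
  have hbound : ∀ n : ℕ, n ≤ hfin.toFinset.card := by
    intro n
    refine le_trans (path_card hX n) (Finset.card_le_card ?_)
    intro x hx
    simp only [Finset.mem_filter, Finset.mem_range] at hx
    simpa [Set.Finite.mem_toFinset] using hx.2
  exact absurd (hbound (hfin.toFinset.card + 1)) (by omega)

open Classical in
/-- the canonical path: the complement of the simple set -/
noncomputable def Xpath : ℕ → Bool := fun n => if n ∈ SimpleA then false else true

lemma Xpath_true_iff {n : ℕ} : Xpath n = true ↔ n ∉ SimpleA := by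
  by_cases h : n ∈ SimpleA <;> simp [Xpath, h]

lemma Xpath_mem_treeT : ∀ k, (List.range k).map Xpath ∈ TreeT := by
  classical
  intro k
  refine treeb_iff.2 ⟨?_, ?_⟩
  · intro i hi ht
    rw [len_map_range] at hi
    rw [getD_map_range Xpath hi] at ht
    have hiA : i ∉ SimpleA := Xpath_true_iff.1 ht
    rw [len_map_range]
    cases h : memAs k i
    · rfl
    · exact absurd (mem_simpleA_iff.2 ⟨k, h⟩) hiA
  · intro n hn
    rw [len_map_range] at hn
    rw [cnt_map_range Xpath (by omega)]
    have hsplit := Finset.card_filter_add_card_filter_not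
      (s := Finset.range (2 * n)) (p := fun i => i ∈ SimpleA)
    have hdens := simpleA_density n
    have hcard : (Finset.range (2 * n)).card = 2 * n := Finset.card_range _
    have heq : (Finset.range (2 * n)).filter (fun i => Xpath i = true)
        = (Finset.range (2 * n)).filter (fun i => ¬ i ∈ SimpleA) := by
      apply Finset.filter_congr
      intro i _
      simp [Xpath_true_iff]
    rw [heq]
    omega

/-! ### no c.e. subset of the complement -/

lemma no_ce_subset_compl {W : Set ℕ} (hre : REPred (· ∈ W)) (hinf : W.Infinite)
    (hsub : ∀ x ∈ W, x ∉ SimpleA) : False := by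
  have h0 : Partrec fun a : ℕ => (Part.assert (a ∈ W) fun _ => Part.some ()) := hre
  have h1 : Partrec fun a : ℕ => (Part.assert (a ∈ W) fun _ => Part.some 0) := by
    have hm := h0.map (Computable.const (0 : ℕ)).to₂
    refine hm.of_eq fun a => Part.ext fun v => ?_
    simp only [Part.mem_map_iff, Part.mem_assert_iff, Part.mem_some_iff]
    tauto
  have h2 : Nat.Partrec (fun a : ℕ => Part.assert (a ∈ W) fun _ => Part.some 0) :=
    Partrec.nat_iff.1 h1
  obtain ⟨c, hc⟩ := Nat.Partrec.Code.exists_code.1 h2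
  have hdom : ∀ a, (eval c a).Dom ↔ a ∈ W := by
    intro a
    rw [hc]
    constructor
    · intro h
      rcases Part.dom_iff_mem.1 h with ⟨v, hv⟩
      exact (Part.mem_assert_iff.1 hv).1
    · intro h
      exact Part.dom_iff_mem.2 ⟨0, Part.mem_assert_iff.2 ⟨h, Part.mem_some_iff.2 rfl⟩⟩
  have hinf' : {x | (eval c x).Dom}.Infinite := by
    have : {x | (eval c x).Dom} = W := Set.ext hdom
    rw [this]; exact hinf
  obtain ⟨x, hx, hxA⟩ := simpleA_immune c hinf'
  exact hsub x ((hdom x).1 hx) hxA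

lemma no_computable_path (X : ℕ → Bool) (hX : ∀ k, (List.range k).map X ∈ TreeT) :
    ¬ Computable X := by
  intro hcomp
  refine no_ce_subset_compl (W := {n | X n = true}) ?_ (path_infinite hX)
    (fun x hx => path_subset_compl hX x hx)
  apply ComputablePred.to_re
  refine ⟨fun n => instDecidableEqBool _ _, ?_⟩
  have heq : (fun a => decide ((fun x => x ∈ {n | X n = true}) a)) = X :=
    funext fun a => by
      show decide (X a = true) = X a
      cases h : X a <;> simp [h]
  rw [heq]
  exact hcomp

/-! ### relative computability lemmas -/

theorem Nat.Partrec.recursiveIn' {O : ℕ → ℕ} {f : ℕ →. ℕ} (hf : Nat.Partrec f) :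
    RecursiveIn' O f := by
  induction hf with
  | zero => exact .zero
  | succ => exact .succ
  | left => exact .left
  | right => exact .right
  | pair _ _ ih₁ ih₂ => exact .pair ih₁ ih₂
  | comp _ _ ih₁ ih₂ => exact .comp ih₁ ih₂
  | prec _ _ ih₁ ih₂ => exact .prec ih₁ ih₂
  | rfind _ ih => exact .rfind ih

theorem RecursiveIn'.partrec_of_zero {f : ℕ →. ℕ} (hf : RecursiveIn' (fun _ => 0) f) :
    Nat.Partrec f := by
  induction hf with
  | zero => exact .zero
  | succ => exact .succ
  | left => exact .left
  | right => exact .right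
  | oracle => exact Nat.Partrec.zero.of_eq fun n => rfl
  | pair _ _ ih₁ ih₂ => exact .pair ih₁ ih₂
  | comp _ _ ih₁ ih₂ => exact .comp ih₁ ih₂
  | prec _ _ ih₁ ih₂ => exact .prec ih₁ ih₂
  | rfind _ ih => exact .rfind ih

theorem RecursiveIn'.of_eq' {O : ℕ → ℕ} {f g : ℕ →. ℕ} (h : RecursiveIn' O f)
    (H : ∀ n, f n = g n) : RecursiveIn' O g := (funext H : f = g) ▸ h

lemma natPartrec_of_primrec {f : ℕ → ℕ} (h : Primrec f) : Nat.Partrec ↑f :=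
  Partrec.nat_iff.1 h.to_comp.partrec

/-! ### the enumeration of a path, relative to the path -/

open Classical in
/-- least element `≥ b` of the set with characteristic function `X` (junk if none) -/
noncomputable def nxtT (X : ℕ → Bool) (b : ℕ) : ℕ :=
  b + (if h : ∃ n, X (b + n) = true then Nat.find h else 0)

/-- `n`-th element of the set with characteristic function `X` -/
noncomputable def nthT (X : ℕ → Bool) : ℕ → ℕ
  | 0 => nxtT X 0
  | n + 1 => nxtT X (nthT X n + 1)

lemma nxtT_ge (X : ℕ → Bool) (b : ℕ) : b ≤ nxtT X b := Nat.le_add_right _ _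

lemma nthT_strictMono (X : ℕ → Bool) : StrictMono (nthT X) := by
  apply strictMono_nat_of_lt_succ
  intro n
  have := nxtT_ge X (nthT X n + 1)
  show nthT X n < nxtT X (nthT X n + 1)
  omega

section pathfacts

variable {X : ℕ → Bool} (hinf : ∀ b, ∃ n, X (b + n) = true)
include hinf

lemma nxtT_true (b : ℕ) : X (nxtT X b) = true := by
  rw [nxtT, dif_pos (hinf b)]
  exact Nat.find_spec (hinf b)

lemma nxtT_min (b : ℕ) : ∀ m, b ≤ m → m < nxtT X b → X m = false := by
  intro m hbm hm
  rw [nxtT, dif_pos (hinf b)] at hm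
  have hno := Nat.find_min (hinf b) (m := m - b) (by omega)
  have hmb : b + (m - b) = m := by omega
  rw [hmb] at hno
  cases h : X m
  · rfl
  · exact absurd h hno

lemma nthT_true : ∀ n, X (nthT X n) = true := by
  intro n
  cases n with
  | zero => exact nxtT_true hinf 0
  | succ n => exact nxtT_true hinf _

/-- the key oracle computation: `nxtT X` is computable in the characteristic function -/
lemma recursiveIn_nxtT : RecursiveIn' (fun n => (X n).toNat) ↑(nxtT X) := by
  set O : ℕ → ℕ := fun n => (X n).toNat with hO
  set g : ℕ → ℕ := fun p => 1 - O (p.unpair.1 + p.unpair.2) with hg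
  have hadd : RecursiveIn' O ↑(fun p : ℕ => p.unpair.1 + p.unpair.2) :=
    (natPartrec_of_primrec (Primrec.nat_add.comp
      (Primrec.fst.comp Primrec.unpair) (Primrec.snd.comp Primrec.unpair))).recursiveIn'
  have hsub : RecursiveIn' O ↑(fun m : ℕ => 1 - m) :=
    (natPartrec_of_primrec (Primrec.nat_sub.comp (Primrec.const 1) Primrec.id)).recursiveIn'
  have h1 : RecursiveIn' O ↑(fun p : ℕ => O (p.unpair.1 + p.unpair.2)) := by
    refine (RecursiveIn'.comp RecursiveIn'.oracle hadd).of_eq' fun n => ?_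
    simp [PFun.coe_val, Part.bind_eq_bind, Part.bind_some]
    exact Part.bind_some _ _
  have h2 : RecursiveIn' O ↑g := by
    refine (RecursiveIn'.comp hsub h1).of_eq' fun n => ?_
    simp [PFun.coe_val, Part.bind_eq_bind, Part.bind_some, hg]
    exact Part.bind_some _ _
  have hid : RecursiveIn' O ↑(fun n : ℕ => n) :=
    (natPartrec_of_primrec Primrec.id).recursiveIn'
  have hrf : RecursiveIn' O fun b =>
      Nat.rfind fun n => (fun m => m = 0) <$> (↑g : ℕ →. ℕ) (Nat.pair b n) :=
    RecursiveIn'.rfind h2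
  have hpair : RecursiveIn' O fun b =>
      Nat.pair <$> (↑(fun n : ℕ => n) : ℕ →. ℕ) b <*>
        (Nat.rfind fun n => (fun m => m = 0) <$> (↑g : ℕ →. ℕ) (Nat.pair b n)) :=
    RecursiveIn'.pair hid hrf
  have hfull := RecursiveIn'.comp hadd hpair
  refine hfull.of_eq' fun b => ?_
  show _ = Part.some (nxtT X b)
  apply Part.eq_some_iff.2
  -- the number found by `rfind`
  have hfind : ∃ n, X (b + n) = true := hinf b
  set n₀ := Nat.find hfind with hn₀
  have hval : nxtT X b = b + n₀ := by rw [nxtT, dif_pos (hinf b)]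
  have hmem : n₀ ∈ Nat.rfind fun n => (fun m => m = 0) <$> (↑g : ℕ →. ℕ) (Nat.pair b n) := by
    refine Nat.mem_rfind.2 ?_
    constructor
    · simp only [PFun.coe_val, Part.map_some, Part.mem_some_iff]
      have hX : X (b + n₀) = true := Nat.find_spec hfind
      simp [hg, hO, Nat.unpair_pair, hX]
    · intro m hm
      simp only [PFun.coe_val, Part.map_some, Part.mem_some_iff]
      have hX : X (b + m) ≠ true := Nat.find_min hfind hm
      have hX' : X (b + m) = false := by cases h : X (b + m) <;> simp_all
      simp [hg, hO, Nat.unpair_pair, hX']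
  -- assemble the membership
  have hseq : Nat.pair b n₀ ∈ (Nat.pair <$> (↑(fun n : ℕ => n) : ℕ →. ℕ) b <*>
      (Nat.rfind fun n => (fun m => m = 0) <$> (↑g : ℕ →. ℕ) (Nat.pair b n))) := by
    have hrw : (Nat.pair <$> (↑(fun n : ℕ => n) : ℕ →. ℕ) b <*>
        (Nat.rfind fun n => (fun m => m = 0) <$> (↑g : ℕ →. ℕ) (Nat.pair b n)))
        = (Nat.rfind fun n => (fun m => m = 0) <$> (↑g : ℕ →. ℕ) (Nat.pair b n)).map
            (Nat.pair b) := by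
      simp [Seq.seq, PFun.coe_val, Part.bind_some, Part.map_some]
    rw [hrw]
    exact Part.mem_map_iff _ |>.2 ⟨n₀, hmem, rfl⟩
  refine Part.mem_bind_iff.2 ⟨Nat.pair b n₀, hseq, ?_⟩
  simp [PFun.coe_val, Nat.unpair_pair, hval, Part.mem_some_iff]

/-- `nthT X` is computable in the characteristic function -/
lemma recursiveIn_nthT : RecursiveIn' (fun n => (X n).toNat) ↑(nthT X) := by
  set O : ℕ → ℕ := fun n => (X n).toNat with hO
  have hnxt : RecursiveIn' O ↑(nxtT X) := recursiveIn_nxtT hinf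
  have hzero : RecursiveIn' O ↑(fun _ : ℕ => (0 : ℕ)) :=
    (natPartrec_of_primrec (Primrec.const 0)).recursiveIn'
  have hbase : RecursiveIn' O ↑(fun _ : ℕ => nxtT X 0) := by
    refine (RecursiveIn'.comp hnxt hzero).of_eq' fun n => ?_
    simp [PFun.coe_val, Part.bind_eq_bind, Part.bind_some]
    exact Part.bind_some _ _
  have hsuccproj : RecursiveIn' O ↑(fun t : ℕ => t.unpair.2.unpair.2 + 1) :=
    (natPartrec_of_primrec (Primrec.succ.comp (Primrec.snd.comp
      (Primrec.unpair.comp (Primrec.snd.comp Primrec.unpair))))).recursiveIn'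
  have hstep : RecursiveIn' O ↑(fun t : ℕ => nxtT X (t.unpair.2.unpair.2 + 1)) := by
    refine (RecursiveIn'.comp hnxt hsuccproj).of_eq' fun n => ?_
    simp [PFun.coe_val, Part.bind_eq_bind, Part.bind_some]
    exact Part.bind_some _ _
  have hF := RecursiveIn'.prec hbase hstep
  have hpair0 : RecursiveIn' O ↑(fun n : ℕ => Nat.pair 0 n) :=
    (natPartrec_of_primrec (Primrec₂.natPair.comp (Primrec.const 0) Primrec.id)).recursiveIn'
  have hcomp := RecursiveIn'.comp hF hpair0
  refine hcomp.of_eq' fun n => ?_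
  show _ = Part.some (nthT X n)
  have hb : ∀ (a : ℕ) (f : ℕ →. ℕ), ((Part.some a : Part ℕ) >>= f) = f a := fun a f =>
    Part.bind_some a f
  induction n with
  | zero =>
      show ((↑(fun n : ℕ => Nat.pair 0 n) : ℕ →. ℕ) 0 >>= _) = _
      erw [show (↑(fun n : ℕ => Nat.pair 0 n) : ℕ →. ℕ) 0 = Part.some (Nat.pair 0 0) from rfl, hb]
      simp [Nat.unpaired, Nat.unpair_pair, nthT, PFun.coe_val]
  | succ n ih =>
      erw [show (↑(fun k : ℕ => Nat.pair 0 k) : ℕ →. ℕ) n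
          = Part.some (Nat.pair 0 n) from rfl, hb] at ih
      simp only [Nat.unpaired, Nat.unpair_pair] at ih
      erw [show (↑(fun k : ℕ => Nat.pair 0 k) : ℕ →. ℕ) (n + 1)
          = Part.some (Nat.pair 0 (n + 1)) from rfl, hb]
      simp only [Nat.unpaired, Nat.unpair_pair]
      erw [ih, hb]
      simp [Nat.unpair_pair, PFun.coe_val, nthT]

end pathfacts

/-! ### assembling the theorem -/

lemma path_in_spec (X : ℕ → Bool) (hX : ∀ k, (List.range k).map X ∈ TreeT) :
    TuringDegree'.deg (fun n => (X n).toNat) ∈ SpecRed (fun x y => x = y) RelR := by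
  have hinf : ∀ b, ∃ n, X (b + n) = true := by
    intro b
    obtain ⟨m, hm, hbm⟩ := (path_infinite hX).exists_gt b
    exact ⟨m - b, by rw [show b + (m - b) = m by omega]; exact hm⟩
  refine ⟨nthT X, recursiveIn_nthT hinf, ?_⟩
  intro x y
  constructor
  · rintro rfl; exact Or.inl rfl
  · rintro (h | ⟨h1, h2⟩)
    · exact (nthT_strictMono X).injective h
    · exact absurd h1 (path_subset_compl hX _ (nthT_true hinf _))

lemma zero_not_in_spec : TuringDegree'.zero ∉ SpecRed (fun x y => x = y) RelR := by
  rintro ⟨f, hfc, hred⟩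
  have hfz : RecursiveIn' (fun _ => 0) ↑f := hfc
  have hnp : Nat.Partrec ↑f := hfz.partrec_of_zero
  have hcf : Computable f := Partrec.nat_iff.2 hnp
  have hinj : Function.Injective f := fun x y hxy => (hred x y).2 (Or.inl hxy)
  have hpairs : ∀ x y, x ≠ y → ¬(f x ∈ SimpleA ∧ f y ∈ SimpleA) := fun x y hxy hmem =>
    hxy ((hred x y).2 (Or.inr hmem))
  classical
  set x₀ : ℕ := if h : ∃ x, f x ∈ SimpleA then h.choose else 0 with hx₀
  set W : Set ℕ := {m | ∃ x, ¬ x = x₀ ∧ f x = m} with hW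
  have hsub : ∀ m ∈ W, m ∉ SimpleA := by
    rintro m ⟨x, hxx, rfl⟩ hmA
    by_cases h : ∃ x, f x ∈ SimpleA
    · have h0 : f h.choose ∈ SimpleA := h.choose_spec
      refine hpairs x h.choose ?_ ⟨hmA, h0⟩
      rw [hx₀, dif_pos h] at hxx
      exact hxx
    · exact h ⟨x, hmA⟩
  have hinfW : W.Infinite := by
    apply Set.infinite_of_injective_forall_mem
      (f := fun n : ℕ => f (if n < x₀ then n else n + 1))
    · intro a b hab
      have := hinj hab
      split_ifs at this <;> omega
    · intro a
      refine ⟨if a < x₀ then a else a + 1, ?_, rfl⟩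
      split_ifs with h <;> omega
  have hre : REPred (· ∈ W) := by
    have h1 : Computable fun p : ℕ × ℕ => !decide (p.2 = x₀) :=
      ((Primrec.dom_bool (!·)).comp (Primrec.eq.comp Primrec.snd (Primrec.const x₀)).decide).to_comp
    have h2 : Computable fun p : ℕ × ℕ => decide (f p.2 = p.1) :=
      Primrec.eq.decide.to_comp.comp (hcf.comp Computable.snd) Computable.fst
    have hq : Computable₂ fun (m x : ℕ) => !decide (x = x₀) && decide (f x = m) :=
      ((Primrec.dom_bool₂ (· && ·)).to_comp.comp h1 h2).to₂
    have := rePred_exists_bool hq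
    refine this.of_eq fun m => ?_
    simp only [Bool.and_eq_true, Bool.not_eq_true', decide_eq_false_iff_not, decide_eq_true_eq]
    constructor
    · rintro ⟨s, hs1, hs2⟩; exact ⟨s, hs1, hs2⟩
    · rintro ⟨x, hx1, hx2⟩; exact ⟨x, hx1, hx2⟩
  exact no_ce_subset_compl hre hinfW hsub

/-- There are a ceer `R` and a computable binary tree `T` whose
infinite paths are characteristic functions of infinite partial transversals of
`R`, such that `T` has a path but no computable one; consequently every degree
of a path of `T` lies in `Spec⇒(Id, R)`, `[T]` is a special `Π⁰₁` class, and
`0 ∉ Spec⇒(Id, R)`. -/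
theorem stmt_13 :
    ∃ R : ℕ → ℕ → Prop, Ceer R ∧
      ∃ T : Set (List Bool), ComputablePred (· ∈ T) ∧
        (∀ σ ∈ T, ∀ τ : List Bool, τ <+: σ → τ ∈ T) ∧
        (∀ X : ℕ → Bool, (∀ k, (List.range k).map X ∈ T) →
          {n | X n = true}.Infinite ∧ PartialTransversal R {n | X n = true}) ∧
        (∃ X : ℕ → Bool, ∀ k, (List.range k).map X ∈ T) ∧
        (∀ X : ℕ → Bool, (∀ k, (List.range k).map X ∈ T) → ¬Computable X) ∧
        (∀ X : ℕ → Bool, (∀ k, (List.range k).map X ∈ T) →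
          TuringDegree'.deg (fun n => (X n).toNat) ∈ SpecRed (fun x y => x = y) R) ∧
        TuringDegree'.zero ∉ SpecRed (fun x y => x = y) R := by
  refine ⟨RelR, ⟨relR_equiv, rePred_relR⟩, TreeT, computablePred_treeT, treeT_prefix_closed,
    ?_, ⟨Xpath, Xpath_mem_treeT⟩, no_computable_path, path_in_spec, zero_not_in_spec⟩
  intro X hX
  refine ⟨path_infinite hX, ?_⟩
  intro x hx y hy hxy hR
  rcases hR with rfl | ⟨h1, _⟩
  · exact hxy rfl
  · exact path_subset_compl hX x hx h1
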